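/- Let f* be the least energy progress measure of an energy game arena Γ. Then for every vertex v ∈ V, v ∈ W₀ if and only if f*(v) ≠ ⊤. In other words, the least energy progress measure decides the winning region of player 0 in the energy game. -/

import Mathlib

open scoped Classical
noncomputable section

/-- An energy game arena: vertices `V`, edge relation `E`, integer weights `w`,
player-0 vertices `P0` (player 1 owns the rest), every vertex has a successor. -/
structure Arena (V : Type) where
  E : V → V → Prop
  w : V → V → ℤ
  P0 : V → Prop
  total : ∀ v, ∃ v', E v v'

variable {V : Type}

/-- `ρ` is a play (infinite path) starting at `v`. -/
def IsPlay (A : Arena V) (v : V) (ρ : ℕ → V) : Prop :=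
  ρ 0 = v ∧ ∀ i, A.E (ρ i) (ρ (i + 1))

/-- A memoryless strategy for player 0. -/
def Strategy0 (A : Arena V) (σ : V → V) : Prop :=
  ∀ v, A.P0 v → A.E v (σ v)

/-- A memoryless strategy for player 1. -/
def Strategy1 (A : Arena V) (σ : V → V) : Prop :=
  ∀ v, ¬ A.P0 v → A.E v (σ v)

/-- The play `ρ` is consistent with the player-0 strategy `σ`. -/
def Consistent0 (A : Arena V) (σ : V → V) (ρ : ℕ → V) : Prop :=
  ∀ j, A.P0 (ρ j) → ρ (j + 1) = σ (ρ j)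

/-- The play `ρ` is consistent with the player-1 strategy `σ`. -/
def Consistent1 (A : Arena V) (σ : V → V) (ρ : ℕ → V) : Prop :=
  ∀ j, ¬ A.P0 (ρ j) → ρ (j + 1) = σ (ρ j)

/-- Energy level of the prefix `ρ 0 … ρ j` with initial credit `c`. -/
def energy (A : Arena V) (c : ℕ) (ρ : ℕ → V) (j : ℕ) : ℤ :=
  (c : ℤ) + ∑ i ∈ Finset.range j, A.w (ρ i) (ρ (i + 1))

/-- The player-0 strategy `σ` is winning from `v` with initial credit `c`. -/
def WinningFrom (A : Arena V) (σ : V → V) (v : V) (c : ℕ) : Prop :=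
  ∀ ρ : ℕ → V, IsPlay A v ρ → Consistent0 A σ ρ → ∀ j, 0 ≤ energy A c ρ j

/-- Winning region of player 0. -/
def W0 (A : Arena V) : Set V :=
  {v | ∃ σ : V → V, Strategy0 A σ ∧ ∃ c : ℕ, WinningFrom A σ v c}

/-- `a ⊖ b = max (0, a - b)`, with `⊤ ⊖ b = ⊤`. -/
def osub (a : ℕ∞) (b : ℤ) : ℕ∞ :=
  a.map (fun n : ℕ => ((n : ℤ) - b).toNat)

/-- Energy progress measure. -/
def IsEPM (A : Arena V) (f : V → ℕ∞) : Prop :=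
  (∀ v, A.P0 v → ∃ v', A.E v v' ∧ osub (f v') (A.w v v') ≤ f v) ∧
  (∀ v, ¬ A.P0 v → ∀ v', A.E v v' → osub (f v') (A.w v v') ≤ f v)

/-- New value at `v` computed by the lifting operator. -/
def liftVal (A : Arena V) (f : V → ℕ∞) (v : V) : ℕ∞ :=
  if A.P0 v then sInf {x : ℕ∞ | ∃ v', A.E v v' ∧ x = osub (f v') (A.w v v')}
  else sSup {x : ℕ∞ | ∃ v', A.E v v' ∧ x = osub (f v') (A.w v v')}

/-- The lifting operator `δ(·, v)`. -/
def liftOp (A : Arena V) (f : V → ℕ∞) (v : V) : V → ℕ∞ :=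
  fun u => if u = v then liftVal A f v else f u

/-- `f` violates the EPM local condition at `v`. -/
def Violates (A : Arena V) (f : V → ℕ∞) (v : V) : Prop :=
  (A.P0 v ∧ ∀ v', A.E v v' → f v < osub (f v') (A.w v v')) ∨
  (¬ A.P0 v ∧ ∃ v', A.E v v' ∧ f v < osub (f v') (A.w v v'))

/-- `M_Γ = Σ_{v∈V} max({0} ∪ {−w(v,v') : (v,v') ∈ E})`. -/
def MGamma (A : Arena V) [Fintype V] : ℕ :=
  ∑ v : V, (Finset.univ.filter (fun v' => A.E v v')).sup (fun v' => (-(A.w v v')).toNat)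

-- auxiliary lemmas

lemma osub_coe (n : ℕ) (b : ℤ) : osub (n : ℕ∞) b = ((((n:ℤ) - b).toNat : ℕ) : ℕ∞) := rfl

lemma osub_top (b : ℤ) : osub (⊤ : ℕ∞) b = ⊤ := rfl

lemma osub_le_coe {a : ℕ∞} {b : ℤ} {c : ℕ} (h : osub a b ≤ (c : ℕ∞)) :
    ∃ n : ℕ, a = (n : ℕ∞) ∧ (n : ℤ) ≤ (c : ℤ) + b := by
  cases a with
  | top => rw [osub_top] at h; exact absurd h (by simp)
  | coe n =>
    refine ⟨n, rfl, ?_⟩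
    rw [osub_coe, Nat.cast_le, Int.toNat_le] at h
    omega

lemma osub_mono {a b : ℕ∞} (h : a ≤ b) (w : ℤ) : osub a w ≤ osub b w := by
  cases b with
  | top => simp [osub_top]
  | coe n =>
    cases a with
    | top => exact absurd h (by simp)
    | coe m =>
      rw [Nat.cast_le] at h
      rw [osub_coe, osub_coe, Nat.cast_le]
      exact Int.toNat_le_toNat (by omega)

lemma energy_succ (A : Arena V) (c : ℕ) (ρ : ℕ → V) (j : ℕ) :
    energy A c ρ (j + 1) = energy A c ρ j + A.w (ρ j) (ρ (j + 1)) := by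
  simp [energy, Finset.sum_range_succ]; ring

/-- There exists a consistent play from any vertex. -/
lemma exists_play (A : Arena V) (σ : V → V) (hσ : Strategy0 A σ) (u : V) :
    ∃ ρ, IsPlay A u ρ ∧ Consistent0 A σ ρ := by
  let ρ : ℕ → V := fun k =>
    Nat.rec u (fun _ p => if A.P0 p then σ p else Classical.choose (A.total p)) k
  have hstep : ∀ k, ρ (k+1) = if A.P0 (ρ k) then σ (ρ k) else Classical.choose (A.total (ρ k)) :=
    fun k => rfl
  refine ⟨ρ, ⟨rfl, fun i => ?_⟩, fun j hj => ?_⟩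
  · rw [hstep i]
    by_cases h : A.P0 (ρ i)
    · simpa [h] using hσ _ h
    · simpa [h] using Classical.choose_spec (A.total (ρ i))
  · rw [hstep j, if_pos hj]

def prepend (u : V) (ρ : ℕ → V) : ℕ → V := fun k => match k with
  | 0 => u
  | k+1 => ρ k

lemma winning_step (A : Arena V) (σ : V → V) (hσ : Strategy0 A σ) (u u' : V)
    (hE : A.E u u') (hcons : A.P0 u → u' = σ u) (c : ℕ) (hw : WinningFrom A σ u c) :
    0 ≤ (c : ℤ) + A.w u u' ∧ WinningFrom A σ u' ((c : ℤ) + A.w u u').toNat := by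
  have hplay : ∀ ρ' : ℕ → V, IsPlay A u' ρ' → Consistent0 A σ ρ' →
      IsPlay A u (prepend u ρ') ∧ Consistent0 A σ (prepend u ρ') := by
    intro ρ' ⟨h0, hEdge⟩ hc
    refine ⟨⟨rfl, fun i => ?_⟩, fun j hj => ?_⟩
    · match i with
      | 0 => simpa [prepend, h0] using hE
      | i+1 => exact hEdge i
    · match j with
      | 0 => simpa [prepend, h0] using hcons hj
      | j+1 => exact hc j hj
  have henergy : ∀ ρ' : ℕ → V, ρ' 0 = u' → ∀ j,
      energy A c (prepend u ρ') (j+1) = (c : ℤ) + A.w u u' + ∑ i ∈ Finset.range j, A.w (ρ' i) (ρ' (i+1)) := by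
    intro ρ' h0 j
    rw [energy, Finset.sum_range_succ']
    simp [prepend, h0]
    ring
  have hnn : 0 ≤ (c : ℤ) + A.w u u' := by
    obtain ⟨ρ', hp', hc'⟩ := exists_play A σ hσ u'
    obtain ⟨hp, hc⟩ := hplay ρ' hp' hc'
    have := hw _ hp hc 1
    rw [henergy ρ' hp'.1 0] at this
    simpa using this
  refine ⟨hnn, fun ρ' hp' hc' j => ?_⟩
  obtain ⟨hp, hc⟩ := hplay ρ' hp' hc'
  have := hw _ hp hc (j+1)
  rw [henergy ρ' hp'.1 j] at this
  rw [energy, Int.toNat_of_nonneg hnn]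
  exact this

/-- The minimal-credit function of a winning strategy is an EPM. -/
lemma gEPM (A : Arena V) (σ : V → V) (hσ : Strategy0 A σ) :
    IsEPM A (fun u => if h : ∃ c, WinningFrom A σ u c then ((Nat.find h : ℕ) : ℕ∞) else ⊤) := by
  set g : V → ℕ∞ := fun u => if h : ∃ c, WinningFrom A σ u c then ((Nat.find h : ℕ) : ℕ∞) else ⊤
    with hg
  have key : ∀ u u', A.E u u' → (A.P0 u → u' = σ u) → osub (g u') (A.w u u') ≤ g u := by
    intro u u' hE hcons
    by_cases h : ∃ c, WinningFrom A σ u c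
    · obtain ⟨hnn, hw'⟩ := winning_step A σ hσ u u' hE hcons (Nat.find h) (Nat.find_spec h)
      have h' : ∃ c, WinningFrom A σ u' c := ⟨_, hw'⟩
      have hle : g u' ≤ ((((Nat.find h : ℤ) + A.w u u').toNat : ℕ) : ℕ∞) := by
        rw [hg]; simp only [dif_pos h']
        exact_mod_cast Nat.find_min' h' hw'
      calc osub (g u') (A.w u u') ≤ osub ((((Nat.find h : ℤ) + A.w u u').toNat : ℕ) : ℕ∞) (A.w u u') :=
            osub_mono hle _
        _ ≤ g u := by
            rw [osub_coe, hg]; simp only [dif_pos h]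
            rw [Nat.cast_le, Int.toNat_le, Int.toNat_of_nonneg hnn]
            omega
    · rw [hg]; simp only [dif_neg h]; exact le_top
  constructor
  · intro u hu
    exact ⟨σ u, hσ u hu, key u (σ u) (hσ u hu) (fun _ => rfl)⟩
  · intro u hu u' hE
    exact key u u' hE (fun h => absurd h hu)


/-- The least energy progress measure decides player 0's winning region:
`v ∈ W₀` iff `f*(v) ≠ ⊤`. -/
theorem stmt9 {V : Type} [Fintype V] [Nonempty V] (A : Arena V)
    (fstar : V → ℕ∞) (hEPM : IsEPM A fstar)
    (hleast : ∀ f : V → ℕ∞, IsEPM A f → ∀ v, fstar v ≤ f v) :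
    ∀ v : V, v ∈ W0 A ↔ fstar v ≠ ⊤ := by
  intro v
  constructor
  · rintro ⟨σ, hσ, c, hwin⟩
    have hg := gEPM A σ hσ
    have hle := hleast _ hg v
    intro htop
    rw [htop, top_le_iff] at hle
    have h : ∃ c, WinningFrom A σ v c := ⟨c, hwin⟩
    simp only [dif_pos h] at hle
    exact (ENat.coe_ne_top _) hle
  · intro hne
    obtain ⟨n0, hn0⟩ : ∃ n : ℕ, fstar v = (n : ℕ∞) := by
      cases hfv : fstar v with
      | top => exact absurd hfv hne
      | coe n => exact ⟨n, rfl⟩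
    -- strategy: at player-0 vertices follow the EPM witness
    let σ : V → V := fun u =>
      if h : A.P0 u then Classical.choose (hEPM.1 u h) else Classical.choose (A.total u)
    have hσ : Strategy0 A σ := by
      intro u hu
      show A.E u (if h : A.P0 u then _ else _)
      rw [dif_pos hu]
      exact (Classical.choose_spec (hEPM.1 u hu)).1
    refine ⟨σ, hσ, n0, fun ρ hp hc j => ?_⟩
    have inv : ∀ j, ∃ n : ℕ, fstar (ρ j) = (n : ℕ∞) ∧ (n : ℤ) ≤ energy A n0 ρ j := by
      intro j
      induction j with
      | zero => exact ⟨n0, by rw [hp.1, hn0], by simp [energy]⟩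
      | succ j ih =>
        obtain ⟨n, hfn, hle⟩ := ih
        have key : osub (fstar (ρ (j+1))) (A.w (ρ j) (ρ (j+1))) ≤ fstar (ρ j) := by
          by_cases hP : A.P0 (ρ j)
          · have hstep : ρ (j+1) = σ (ρ j) := hc j hP
            have hσeq : σ (ρ j) = Classical.choose (hEPM.1 (ρ j) hP) := dif_pos hP
            rw [hstep, hσeq]
            exact (Classical.choose_spec (hEPM.1 (ρ j) hP)).2
          · exact hEPM.2 (ρ j) hP (ρ (j+1)) (hp.2 j)
        rw [hfn] at key
        obtain ⟨n', hn', hn'le⟩ := osub_le_coe key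
        refine ⟨n', hn', ?_⟩
        rw [energy_succ]
        omega
    obtain ⟨n, _, hle⟩ := inv j
    have : (0:ℤ) ≤ (n:ℤ) := Int.ofNat_nonneg n
    omega
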